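/- Let X be a flow space for G and γ > 0. The subspace X_cyc of all points on compact flow lines with G-period at most γ is closed in X. Here X_cyc = {x ∈ X | ∃ t > 0 : Φ_t(x) = x} ∩ X_{≤γ}, where X_{≤γ} is the set of points with G-period at most γ. -/

import Mathlib

open Pointwise Filter Set Topology

private lemma iter_vadd {G X : Type*} [Group G] [MulAction G X] [AddAction ℝ X]
    (hcomm : ∀ (g : G) (t : ℝ) (x : X), t +ᵥ (g • x) = g • (t +ᵥ x))
    (g : G) (t : ℝ) (x : X) (h : t +ᵥ x = g • x) :
    ∀ k : ℕ, ((k : ℝ) * t) +ᵥ x = g ^ k • x := by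
  intro k
  induction k with
  | zero => simp
  | succ k ih =>
    have h1 : ((k + 1 : ℕ) : ℝ) * t = t + (k : ℝ) * t := by push_cast; ring
    rw [h1, add_vadd, ih, hcomm, h, pow_succ, mul_smul]

theorem stmt15 {G X : Type*} [Group G] [MetricSpace X] [MulAction G X] [AddAction ℝ X]
    (hiso : ∀ g : G, Isometry (fun x : X => g • x))
    (hproper : ∀ K : Set X, IsCompact K → {g : G | (K ∩ g • K).Nonempty}.Finite)
    (hflowcont : Continuous fun p : ℝ × X => p.1 +ᵥ p.2)
    (hcomm : ∀ (g : G) (t : ℝ) (x : X), t +ᵥ (g • x) = g • (t +ᵥ x))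
    (γ : ℝ) (hγ : 0 < γ) :
    IsClosed ({x : X | ∃ t : ℝ, 0 < t ∧ t +ᵥ x = x} ∩
      {x : X | ∃ g : G, ∃ t : ℝ, 0 < t ∧ t ≤ γ ∧ t +ᵥ x = g • x}) := by
  apply IsSeqClosed.isClosed
  intro u x hu hux
  -- extract periods and G-period data
  choose p hp0 hpeq using fun n => (hu n).1
  choose g0 t ht0 htγ hteq using fun n => (hu n).2
  -- upgrade the G-periods to lie in (γ/2, γ]
  set k : ℕ → ℕ := fun n => ⌊γ / t n⌋₊ with hk
  set t' : ℕ → ℝ := fun n => (k n : ℝ) * t n with ht'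
  set g' : ℕ → G := fun n => (g0 n) ^ (k n) with hg'
  have hk1 : ∀ n, 1 ≤ k n := fun n =>
    Nat.le_floor (by rw [Nat.cast_one]; exact (one_le_div (ht0 n)).mpr (htγ n))
  have ht'γ : ∀ n, t' n ≤ γ := fun n =>
    (le_div_iff₀ (ht0 n)).mp (Nat.floor_le (div_nonneg hγ.le (ht0 n).le))
  have ht'lb : ∀ n, γ / 2 < t' n := by
    intro n
    have h1 : γ < ((k n : ℝ) + 1) * t n := (div_lt_iff₀ (ht0 n)).mp (Nat.lt_floor_add_one _)
    have h2 : t n ≤ t' n := by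
      have : (1 : ℝ) ≤ (k n : ℝ) := by exact_mod_cast hk1 n
      calc t n = 1 * t n := (one_mul _).symm
        _ ≤ (k n : ℝ) * t n := by nlinarith [(ht0 n).le]
    have : γ < t' n + t n := by simp only [ht']; nlinarith
    linarith
  have ht'eq : ∀ n, t' n +ᵥ u n = g' n • u n := fun n =>
    iter_vadd hcomm (g0 n) (t n) (u n) (hteq n) (k n)
  have ht'pos : ∀ n, 0 < t' n := fun n => lt_trans (by linarith) (ht'lb n)
  -- a compact set containing all u n and all t' n +ᵥ u n
  have hC : IsCompact (insert x (Set.range u)) := hux.isCompact_insert_range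
  set K : Set X := (fun q : ℝ × X => q.1 +ᵥ q.2) '' (Set.Icc 0 γ ×ˢ insert x (Set.range u))
    with hKdef
  have hK : IsCompact K := (isCompact_Icc.prod hC).image hflowcont
  have huK : ∀ n, u n ∈ K := fun n =>
    ⟨(0, u n), ⟨⟨le_refl 0, hγ.le⟩, Or.inr ⟨n, rfl⟩⟩, zero_vadd ℝ (u n)⟩
  have hvK : ∀ n, t' n +ᵥ u n ∈ K := fun n =>
    ⟨(t' n, u n), ⟨⟨(ht'pos n).le, ht'γ n⟩, Or.inr ⟨n, rfl⟩⟩, rfl⟩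
  have hg'F : ∀ n, g' n ∈ {g : G | (K ∩ g • K).Nonempty} := by
    intro n
    exact ⟨g' n • u n, by rw [← ht'eq n]; exact hvK n, Set.smul_mem_smul_set (huK n)⟩
  -- pigeonhole: some g occurs infinitely often
  have hFfin : {g : G | (K ∩ g • K).Nonempty}.Finite := hproper K hK
  have hexg : ∃ g : G, {n | g' n = g}.Infinite := by
    by_contra hcon
    push_neg at hcon
    have hfibfin : ∀ g : G, {n | g' n = g}.Finite := fun g =>
      hcon g
    have hsub : (Set.univ : Set ℕ) ⊆ ⋃ h ∈ {g : G | (K ∩ g • K).Nonempty}, {n | g' n = h} := by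
      intro n _
      exact Set.mem_biUnion (hg'F n) rfl
    exact Set.infinite_univ ((hFfin.biUnion fun h _ => hfibfin h).subset hsub)
  obtain ⟨g, hginf⟩ := hexg
  obtain ⟨φ, hφ, hφg⟩ :=
    extraction_of_frequently_atTop (Nat.frequently_atTop_iff_infinite.mpr hginf)
  -- extract a convergent subsequence of the G-periods
  obtain ⟨s, hsmem, ψ, hψ, htψ⟩ :=
    (isCompact_Icc (a := γ / 2) (b := γ)).tendsto_subseq
      (x := fun n => t' (φ n)) (fun n => ⟨(ht'lb (φ n)).le, ht'γ (φ n)⟩)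
  set idx : ℕ → ℕ := fun n => φ (ψ n) with hidx
  have hspos : 0 < s := lt_of_lt_of_le (by linarith) hsmem.1
  have hul : Filter.Tendsto (fun n => u (idx n)) atTop (𝓝 x) :=
    hux.comp ((hφ.comp hψ).tendsto_atTop)
  have htl : Filter.Tendsto (fun n => t' (idx n)) atTop (𝓝 s) := htψ
  have hgeq : ∀ n, t' (idx n) +ᵥ u (idx n) = g • u (idx n) := by
    intro n
    rw [ht'eq (idx n), hφg (ψ n)]
  -- take limits
  have hL1 : Filter.Tendsto (fun n => t' (idx n) +ᵥ u (idx n)) atTop (𝓝 (s +ᵥ x)) :=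
    (hflowcont.tendsto (s, x)).comp (htl.prodMk_nhds hul)
  have hL2 : Filter.Tendsto (fun n => t' (idx n) +ᵥ u (idx n)) atTop (𝓝 (g • x)) := by
    refine Filter.Tendsto.congr (fun n => (hgeq n).symm) ?_
    exact ((hiso g).continuous.tendsto x).comp hul
  have hsx : s +ᵥ x = g • x := tendsto_nhds_unique hL1 hL2
  -- g has finite order: use the compact flow line through u (idx 0)
  set x₀ : X := u (idx 0) with hx₀
  set p₀ : ℝ := p (idx 0) with hp₀
  have hp₀pos : 0 < p₀ := hp0 (idx 0)
  set t₀ : ℝ := t' (idx 0) with ht₀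
  have ht₀pos : 0 < t₀ := ht'pos (idx 0)
  have heq₀ : t₀ +ᵥ x₀ = g • x₀ := hgeq 0
  set L : Set X := (fun r : ℝ => r +ᵥ x₀) '' Set.Icc 0 p₀ with hL
  have hLc : IsCompact L :=
    isCompact_Icc.image (hflowcont.comp (continuous_id.prodMk continuous_const))
  have hx₀L : x₀ ∈ L := ⟨0, ⟨le_refl 0, hp₀pos.le⟩, zero_vadd ℝ x₀⟩
  have hper : ∀ m : ℕ, ((m : ℝ) * p₀) +ᵥ x₀ = x₀ := by
    intro m
    have h := iter_vadd hcomm (1 : G) p₀ x₀ (by simpa using hpeq (idx 0)) m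
    simpa using h
  have hgkL : ∀ j : ℕ, g ^ j • x₀ ∈ L := by
    intro j
    have h1 : ((j : ℝ) * t₀) +ᵥ x₀ = g ^ j • x₀ := iter_vadd hcomm g t₀ x₀ heq₀ j
    set r : ℝ := (j : ℝ) * t₀ with hr
    have hr0 : 0 ≤ r := by positivity
    set m : ℕ := ⌊r / p₀⌋₊ with hm
    have hml : (m : ℝ) * p₀ ≤ r := (le_div_iff₀ hp₀pos).mp (Nat.floor_le (div_nonneg hr0 hp₀pos.le))
    have hmu : r < ((m : ℝ) + 1) * p₀ := (div_lt_iff₀ hp₀pos).mp (Nat.lt_floor_add_one _)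
    have key : r +ᵥ x₀ = (r - (m : ℝ) * p₀) +ᵥ x₀ := by
      conv_lhs => rw [show r = (r - (m : ℝ) * p₀) + (m : ℝ) * p₀ by ring]
      rw [add_vadd, hper m]
    refine ⟨r - (m : ℝ) * p₀, ⟨by linarith, by nlinarith⟩, ?_⟩
    show (r - (m : ℝ) * p₀) +ᵥ x₀ = g ^ j • x₀
    rw [← key, h1]
  have hne : ∃ a b : ℕ, (fun j : ℕ => (g ^ j : G)) a = (fun j : ℕ => (g ^ j : G)) b ∧ a ≠ b := by
    have hLF : {h : G | (L ∩ h • L).Nonempty}.Finite := hproper L hLc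
    have hmapsto : ∀ j : ℕ, (g ^ j : G) ∈ {h : G | (L ∩ h • L).Nonempty} := fun j =>
      ⟨g ^ j • x₀, hgkL j, Set.smul_mem_smul_set hx₀L⟩
    have : Finite ↥{h : G | (L ∩ h • L).Nonempty} := hLF.to_subtype
    obtain ⟨a, b, hab, heq⟩ := Finite.exists_ne_map_eq_of_infinite
      (fun j : ℕ => (⟨g ^ j, hmapsto j⟩ : {h : G | (L ∩ h • L).Nonempty}))
    exact ⟨a, b, by simpa using congrArg Subtype.val heq, hab⟩
  obtain ⟨a, b, hab0, hne'⟩ := hne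
  have hab : (g : G) ^ a = g ^ b := hab0
  -- get m > 0 with g ^ m = 1
  have hfin : ∃ m : ℕ, 0 < m ∧ (g : G) ^ m = 1 := by
    rcases lt_or_gt_of_ne hne' with h | h
    · refine ⟨b - a, Nat.sub_pos_of_lt h, ?_⟩
      have h2 : g ^ (b - a) * g ^ a = 1 * g ^ a := by
        rw [← pow_add, Nat.sub_add_cancel h.le, one_mul, ← hab]
      exact mul_right_cancel h2
    · refine ⟨a - b, Nat.sub_pos_of_lt h, ?_⟩
      have h2 : g ^ (a - b) * g ^ b = 1 * g ^ b := by
        rw [← pow_add, Nat.sub_add_cancel h.le, one_mul, hab]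
      exact mul_right_cancel h2
  obtain ⟨m, hmpos, hgm⟩ := hfin
  constructor
  · refine ⟨(m : ℝ) * s, by positivity, ?_⟩
    have h := iter_vadd hcomm g s x hsx m
    rw [hgm, one_smul] at h
    exact h
  · exact ⟨g, s, hspos, hsmem.2, hsx⟩
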